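/- Fix r ∈ (0,1), a stationary state x of the recombinator dynamics, and a trait a_d with x(a_d) = 0. Then the system of equations η(a_{-d}) = (1−r)·η(a_{-d})·u_x(a_d,a_{-d}) / (Σ_{a'_{-d}} η(a'_{-d}) u_x(a_d,a'_{-d})) + r·∏_{d'≠d} x(a_{d'}), for a_{-d} ∈ supp_{-d}(x), admits a unique solution η in the probability simplex Δ(supp_{-d}(x)). -/
import Mathlib


open Finset

noncomputable section

variable {D : Type*} [Fintype D] [DecidableEq D] {A : D → Type*}
  [∀ d, Fintype (A d)] [∀ d, DecidableEq (A d)]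

/-- payoff of type `a` at state `x`: `u_x(a) = ∑ a', x(a') u(a,a')`. -/
def typePay (u : (∀ d, A d) → (∀ d, A d) → ℝ) (x : (∀ d, A d) → ℝ) (a : ∀ d, A d) : ℝ :=
  ∑ a', x a' * u a a'

/-- mean payoff `u_x`. -/
def meanPay (u : (∀ d, A d) → (∀ d, A d) → ℝ) (x : (∀ d, A d) → ℝ) : ℝ :=
  ∑ a, x a * typePay u x a

/-- marginal frequency `x(a_d)` of trait `t` in dimension `d`. -/
def marg (x : (∀ d, A d) → ℝ) (d : D) (t : A d) : ℝ :=
  ∑ a, if a d = t then x a else 0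

/-- marginal trait payoff `u_x(a_d)` (0 by div-by-zero convention when `x(a_d)=0`). -/
def traitPay (u : (∀ d, A d) → (∀ d, A d) → ℝ) (x : (∀ d, A d) → ℝ) (d : D) (t : A d) : ℝ :=
  (∑ a, if a d = t then x a * typePay u x a else 0) / marg x d t

/-- the recombinator vector field `ẋ(a)` with recombination rate `r`. -/
def recomb (u : (∀ d, A d) → (∀ d, A d) → ℝ) (x : (∀ d, A d) → ℝ) (r : ℝ) (a : ∀ d, A d) : ℝ :=
  (1 - r) * x a * typePay u x a / meanPay u x
    + r * ∏ d, (marg x d (a d) * traitPay u x d (a d) / meanPay u x)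
    - x a

/-- the trait-to-type ratio `m_x(a)`. -/
def ttRatio (x : (∀ d, A d) → ℝ) (a : ∀ d, A d) : ℝ :=
  (∏ d, marg x d (a d)) / x a

/-- the `r`-payoff `z^r_x(a)`. -/
def rPay (u : (∀ d, A d) → (∀ d, A d) → ℝ) (x : (∀ d, A d) → ℝ) (r : ℝ) (a : ∀ d, A d) : ℝ :=
  (1 - r) * typePay u x a / meanPay u x
    + r * ttRatio x a * ∏ d, (traitPay u x d (a d) / meanPay u x)

/-- glue a trait `t` in dimension `d` with a partner profile `p` on the other
dimensions, producing a full type `(a_d, a_{-d})`. -/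
def glue (d : D) (t : A d) (p : ∀ d' : {d' : D // d' ≠ d}, A d') : ∀ d', A d' :=
  fun d' => if h : d' = d then h.symm ▸ t else p ⟨d', h⟩

set_option linter.unusedSectionVars false
set_option maxHeartbeats 1000000

private lemma ite_nonneg'' {c : Prop} [Decidable c] {a : ℝ} (h : 0 ≤ a) :
    (0:ℝ) ≤ if c then a else 0 := by split; exacts [h, le_rfl]

private lemma ite_le_self' {c : Prop} [Decidable c] {a : ℝ} (h : 0 ≤ a) :
    (if c then a else 0) ≤ a := by split; exacts [le_rfl, h]

private lemma exists_pos_of_sum_pos' {ι : Type*} {s : Finset ι} {f : ι → ℝ}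
    (h : 0 < ∑ i ∈ s, f i) : ∃ i ∈ s, 0 < f i := by
  by_contra hc
  push_neg at hc
  exact absurd (Finset.sum_nonpos hc) (not_le.mpr h)

private lemma glue_sum (d : D) (f : (∀ d'', A d'') → ℝ) :
    ∑ a, f a = ∑ p, ∑ s : A d, f (glue d s p) := by
  rw [← Equiv.sum_comp (Equiv.piSplitAt d A).symm f, Fintype.sum_prod_type, Finset.sum_comm]
  rfl

private lemma glue_other (d : D) (s : A d) (p : ∀ d' : {d' : D // d' ≠ d}, A d')
    (d' : {d' : D // d' ≠ d}) : glue d s p d'.1 = p d' := by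
  rw [glue, dif_neg d'.2]

private lemma glue_same (d : D) (s : A d) (p : ∀ d' : {d' : D // d' ≠ d}, A d') :
    glue d s p d = s := by
  rw [glue, dif_pos rfl]

private lemma typePay_pos (u : (∀ d, A d) → (∀ d, A d) → ℝ) (hu : ∀ a a', 0 < u a a')
    (x : (∀ d, A d) → ℝ) (hx : ∀ a, 0 ≤ x a) (hsum : ∑ a, x a = 1)
    (a : ∀ d, A d) : 0 < typePay u x a := by
  obtain ⟨a₀, -, ha₀⟩ := exists_pos_of_sum_pos' (f := x) (s := Finset.univ)
    (by rw [hsum]; norm_num)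
  exact Finset.sum_pos' (fun a' _ => mul_nonneg (hx a') (hu a a').le)
    ⟨a₀, Finset.mem_univ _, mul_pos ha₀ (hu a a₀)⟩

private lemma meanPay_pos (u : (∀ d, A d) → (∀ d, A d) → ℝ) (hu : ∀ a a', 0 < u a a')
    (x : (∀ d, A d) → ℝ) (hx : ∀ a, 0 ≤ x a) (hsum : ∑ a, x a = 1) :
    0 < meanPay u x := by
  obtain ⟨a₀, -, ha₀⟩ := exists_pos_of_sum_pos' (f := x) (s := Finset.univ)
    (by rw [hsum]; norm_num)
  exact Finset.sum_pos' (fun a _ => mul_nonneg (hx a) (typePay_pos u hu x hx hsum a).le)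
    ⟨a₀, Finset.mem_univ _, mul_pos ha₀ (typePay_pos u hu x hx hsum a₀)⟩

private lemma marg_nonneg (x : (∀ d, A d) → ℝ) (hx : ∀ a, 0 ≤ x a) (d : D) (t : A d) :
    0 ≤ marg x d t :=
  Finset.sum_nonneg fun a _ => ite_nonneg'' (hx a)

private lemma marg_sum (x : (∀ d, A d) → ℝ) (hsum : ∑ a, x a = 1) (d : D) :
    ∑ t, marg x d t = 1 := by
  unfold marg
  rw [Finset.sum_comm]
  simp only [Finset.sum_ite_eq, Finset.mem_univ, if_true]
  exact hsum

private lemma marg_le_one (x : (∀ d, A d) → ℝ) (hx : ∀ a, 0 ≤ x a) (hsum : ∑ a, x a = 1)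
    (d : D) (t : A d) : marg x d t ≤ 1 := by
  calc marg x d t ≤ ∑ a, x a := Finset.sum_le_sum fun a _ => ite_le_self' (hx a)
    _ = 1 := hsum

private lemma marg_eq_zero_of_factor (u : (∀ d, A d) → (∀ d, A d) → ℝ)
    (hu : ∀ a a', 0 < u a a') (x : (∀ d, A d) → ℝ) (hx : ∀ a, 0 ≤ x a)
    (hsum : ∑ a, x a = 1) (d : D) (t : A d)
    (h0 : marg x d t * traitPay u x d t / meanPay u x = 0) : marg x d t = 0 := by
  by_contra hne
  have hT := typePay_pos u hu x hx hsum
  have hpos : 0 < marg x d t := lt_of_le_of_ne (marg_nonneg x hx d t) (Ne.symm hne)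
  obtain ⟨a, -, ha⟩ := exists_pos_of_sum_pos' hpos
  have had : a d = t := by by_contra h; rw [if_neg h] at ha; exact lt_irrefl 0 ha
  rw [if_pos had] at ha
  have hN : 0 < ∑ a, if a d = t then x a * typePay u x a else 0 :=
    Finset.sum_pos' (fun a' _ => ite_nonneg'' (mul_nonneg (hx a') (hT a').le))
      ⟨a, Finset.mem_univ a, by rw [if_pos had]; exact mul_pos ha (hT a)⟩
  have : 0 < marg x d t * traitPay u x d t / meanPay u x := by
    unfold traitPay
    rw [mul_div_assoc', mul_div_cancel_left₀ _ hpos.ne']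
    exact div_pos hN (meanPay_pos u hu x hx hsum)
  exact lt_irrefl 0 (h0 ▸ this)

/-- the scalar fixed-point equation has a unique solution -/
private lemma key_analysis {ι : Type*} [Fintype ι] (S : Finset ι) (hSne : S.Nonempty)
    (π c : ι → ℝ) (hπpos : ∀ p ∈ S, 0 < π p) (hπle : ∀ p, π p ≤ 1)
    (hc : ∀ p ∈ S, 0 < c p) (hπS : ∑ p ∈ S, π p = 1)
    (r : ℝ) (hr0 : 0 < r) (hr1 : r < 1) :
    ∃! s : ℝ, 0 < s ∧ (∀ p ∈ S, 0 < 1 - (1 - r) * c p * s) ∧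
      ∑ p ∈ S, r * π p / (1 - (1 - r) * c p * s) = 1 := by
  have hr1' : (0:ℝ) < 1 - r := by linarith
  obtain ⟨pm, hpmS, hpm⟩ := S.exists_max_image c hSne
  have hrπm : r * π pm < 1 := lt_of_le_of_lt (mul_le_of_le_one_right hr0.le (hπle pm)) hr1
  have hrπmpos : 0 < r * π pm := mul_pos hr0 (hπpos pm hpmS)
  have hbm : 0 < (1 - r) * c pm := mul_pos hr1' (hc pm hpmS)
  set sm : ℝ := (1 - r * π pm) / ((1 - r) * c pm) with hsmdef
  have hsmpos : 0 < sm := div_pos (by linarith) hbm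
  have hsmeq : (1 - r) * c pm * sm = 1 - r * π pm := mul_div_cancel₀ _ hbm.ne'
  have hden : ∀ p ∈ S, ∀ s : ℝ, 0 ≤ s → s ≤ sm → r * π pm ≤ 1 - (1 - r) * c p * s := by
    intro p hp s hs0' hssm
    have h1 : (1 - r) * c p * s ≤ (1 - r) * c pm * sm :=
      mul_le_mul (mul_le_mul_of_nonneg_left (hpm p hp) hr1'.le) hssm hs0' hbm.le
    rw [hsmeq] at h1
    linarith
  have hmono : ∀ s1 s2 : ℝ, (∀ p ∈ S, 0 < 1 - (1 - r) * c p * s2) → s1 < s2 →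
      (∑ p ∈ S, r * π p / (1 - (1 - r) * c p * s1)) <
        ∑ p ∈ S, r * π p / (1 - (1 - r) * c p * s2) := by
    intro s1 s2 h2 hlt
    refine Finset.sum_lt_sum_of_nonempty hSne fun p hp => ?_
    refine div_lt_div_of_pos_left (mul_pos hr0 (hπpos p hp)) (h2 p hp) ?_
    have := mul_lt_mul_of_pos_left hlt (mul_pos hr1' (hc p hp))
    linarith
  have hcont : ContinuousOn (fun s => ∑ p ∈ S, r * π p / (1 - (1 - r) * c p * s))
      (Set.Icc 0 sm) := by
    refine continuousOn_finset_sum S fun p hp => ?_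
    refine ContinuousOn.div continuousOn_const
      (continuous_const.sub (continuous_mul_left _)).continuousOn ?_
    intro s hs
    exact (lt_of_lt_of_le hrπmpos (hden p hp s hs.1 hs.2)).ne'
  have hg0 : (∑ p ∈ S, r * π p / (1 - (1 - r) * c p * 0)) = r := by
    simp only [mul_zero, sub_zero, div_one]
    rw [← Finset.mul_sum, hπS, mul_one]
  have hgsm : 1 ≤ ∑ p ∈ S, r * π p / (1 - (1 - r) * c p * sm) := by
    have hterm : r * π pm / (1 - (1 - r) * c pm * sm) = 1 := by
      rw [hsmeq, show 1 - (1 - r * π pm) = r * π pm from by ring]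
      exact div_self hrπmpos.ne'
    calc (1:ℝ) = r * π pm / (1 - (1 - r) * c pm * sm) := hterm.symm
      _ ≤ _ := Finset.single_le_sum (f := fun p => r * π p / (1 - (1 - r) * c p * sm))
          (fun p hp => div_nonneg (mul_nonneg hr0.le (hπpos p hp).le)
            (le_trans hrπmpos.le (hden p hp sm hsmpos.le le_rfl))) hpmS
  obtain ⟨s₀, hs₀mem, hgs₀⟩ := intermediate_value_Icc hsmpos.le hcont
    (Set.mem_Icc.mpr ⟨le_trans hg0.le hr1.le, hgsm⟩)
  have hgs₀' : ∑ p ∈ S, r * π p / (1 - (1 - r) * c p * s₀) = 1 := hgs₀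
  have hs₀pos : 0 < s₀ := by
    rcases lt_or_eq_of_le hs₀mem.1 with h | h
    · exact h
    · exfalso; rw [← h] at hgs₀'; rw [hg0] at hgs₀'; linarith
  have hvalid₀ : ∀ p ∈ S, 0 < 1 - (1 - r) * c p * s₀ :=
    fun p hp => lt_of_lt_of_le hrπmpos (hden p hp s₀ hs₀mem.1 hs₀mem.2)
  refine ⟨s₀, ⟨hs₀pos, hvalid₀, hgs₀'⟩, ?_⟩
  rintro s' ⟨hs'pos, hval', hg''⟩
  rcases lt_trichotomy s' s₀ with h | h | h
  · have := hmono s' s₀ hvalid₀ h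
    rw [hg'', hgs₀'] at this
    exact absurd this (lt_irrefl 1)
  · exact h
  · have := hmono s₀ s' hval' h
    rw [hg'', hgs₀'] at this
    exact absurd this (lt_irrefl 1)
/-- the stable partner distribution of an invading trait is
well-defined: Equation (13) has a unique solution in `Δ(supp_{-d}(x))`. -/
theorem stable_partner_distribution_exists_unique
    (u : (∀ d, A d) → (∀ d, A d) → ℝ) (hu : ∀ a a', 0 < u a a')
    (x : (∀ d, A d) → ℝ) (hx : ∀ a, 0 ≤ x a) (hsum : ∑ a, x a = 1)
    (r : ℝ) (hr0 : 0 < r) (hr1 : r < 1)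
    (hstat : ∀ a, recomb u x r a = 0)
    (d : D) (t : A d) (ht : marg x d t = 0) :
    ∃! η : (∀ d' : {d' : D // d' ≠ d}, A d') → ℝ,
      (∀ p, 0 ≤ η p) ∧ (∑ p, η p = 1) ∧
      (∀ p, ¬ (0 < ∑ s : A d, x (glue d s p)) → η p = 0) ∧
      (∀ p, 0 < ∑ s : A d, x (glue d s p) →
        η p = (1 - r) * η p * typePay u x (glue d t p) /
            (∑ p', if 0 < ∑ s : A d, x (glue d s p') then
                η p' * typePay u x (glue d t p') else 0)
          + r * ∏ d' : {d' : D // d' ≠ d}, marg x d'.1 (p d')) := by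
  have hT := typePay_pos u hu x hx hsum
  have hr1' : (0:ℝ) < 1 - r := by linarith
  set S : Finset (∀ d' : {d' : D // d' ≠ d}, A d') :=
    Finset.univ.filter (fun p => 0 < ∑ s : A d, x (glue d s p)) with hSdef
  have hmemS : ∀ p, p ∈ S ↔ 0 < ∑ s : A d, x (glue d s p) := by
    intro p; rw [hSdef, Finset.mem_filter]; simp
  have hSne : S.Nonempty := by
    obtain ⟨p1, -, hp1⟩ := exists_pos_of_sum_pos'
      (show (0:ℝ) < ∑ p, ∑ s : A d, x (glue d s p) from by
        rw [← glue_sum d x, hsum]; norm_num)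
    exact ⟨p1, (hmemS p1).mpr hp1⟩
  obtain ⟨s0, -, hs0⟩ := exists_pos_of_sum_pos'
    (show (0:ℝ) < ∑ s : A d, marg x d s from by rw [marg_sum x hsum d]; norm_num)
  -- π vanishes off S (uses stationarity)
  have hπ0 : ∀ p, p ∉ S → (∏ d' : {d' : D // d' ≠ d}, marg x d'.1 (p d')) = 0 := by
    intro p hp
    rw [hmemS] at hp
    have hz : ∀ s, x (glue d s p) = 0 := by
      have hsum0 : ∑ s : A d, x (glue d s p) = 0 :=
        le_antisymm (not_lt.mp hp) (Finset.sum_nonneg fun s _ => hx _)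
      intro s
      exact (Finset.sum_eq_zero_iff_of_nonneg (fun s _ => hx _)).mp hsum0 s (Finset.mem_univ s)
    have hst := hstat (glue d s0 p)
    unfold recomb at hst
    rw [hz s0] at hst
    simp only [mul_zero, zero_mul, zero_div, zero_add, sub_zero] at hst
    have hprod := (mul_eq_zero.mp hst).resolve_left hr0.ne'
    obtain ⟨d', -, hd'⟩ := Finset.prod_eq_zero_iff.mp hprod
    have hmz := marg_eq_zero_of_factor u hu x hx hsum d' _ hd'
    have hdd : d' ≠ d := by
      rintro rfl
      rw [glue_same] at hmz
      exact hs0.ne' hmz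
    rw [show glue d s0 p d' = p ⟨d', hdd⟩ from glue_other d s0 p ⟨d', hdd⟩] at hmz
    exact Finset.prod_eq_zero (Finset.mem_univ (⟨d', hdd⟩ : {d' : D // d' ≠ d})) hmz
  have hπS : ∑ p ∈ S, (∏ d' : {d' : D // d' ≠ d}, marg x d'.1 (p d')) = 1 := by
    rw [Finset.sum_subset (Finset.subset_univ S) (fun p _ hp => hπ0 p hp)]
    rw [← Fintype.prod_sum (fun (d' : {d' : D // d' ≠ d}) (t' : A d'.1) => marg x d'.1 t')]
    exact Finset.prod_eq_one fun d' _ => marg_sum x hsum d'.1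
  have hπpos : ∀ p ∈ S, 0 < ∏ d' : {d' : D // d' ≠ d}, marg x d'.1 (p d') := by
    intro p hp
    rw [hmemS] at hp
    obtain ⟨s, -, hsx⟩ := exists_pos_of_sum_pos' hp
    refine Finset.prod_pos fun d' _ => lt_of_lt_of_le hsx ?_
    have heq : (if glue d s p d'.1 = p d' then x (glue d s p) else 0) = x (glue d s p) :=
      if_pos (glue_other d s p d')
    calc x (glue d s p) = _ := heq.symm
      _ ≤ marg x d'.1 (p d') :=
        Finset.single_le_sum (f := fun a => if a d'.1 = p d' then x a else 0)
          (fun a _ => ite_nonneg'' (hx a)) (Finset.mem_univ (glue d s p))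
  have hπle : ∀ p : ∀ d' : {d' : D // d' ≠ d}, A d', (∏ d' : {d' : D // d' ≠ d}, marg x d'.1 (p d')) ≤ 1 := fun p =>
    Finset.prod_le_one (fun d' _ => marg_nonneg x hx _ _) (fun d' _ => marg_le_one x hx hsum _ _)
  -- the scalar equation
  obtain ⟨s₀, ⟨hs₀pos, hvalid₀, hgs₀⟩, huniq⟩ := key_analysis S hSne
    (fun p => ∏ d' : {d' : D // d' ≠ d}, marg x d'.1 (p d'))
    (fun p => typePay u x (glue d t p)) hπpos hπle (fun p _ => hT _) hπS r hr0 hr1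

  -- the candidate solution
  set η : (∀ d' : {d' : D // d' ≠ d}, A d') → ℝ := fun p =>
    if 0 < ∑ s : A d, x (glue d s p) then
      r * (∏ d' : {d' : D // d' ≠ d}, marg x d'.1 (p d')) /
        (1 - (1 - r) * typePay u x (glue d t p) * s₀)
    else 0 with hηdef
  have hηeq : ∀ p, η p = if 0 < ∑ s : A d, x (glue d s p) then
      r * (∏ d' : {d' : D // d' ≠ d}, marg x d'.1 (p d')) /
        (1 - (1 - r) * typePay u x (glue d t p) * s₀)
    else 0 := fun p => rfl
  have hηS : ∀ p ∈ S, η p = r * (∏ d' : {d' : D // d' ≠ d}, marg x d'.1 (p d')) /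
      (1 - (1 - r) * typePay u x (glue d t p) * s₀) :=
    fun p hp => by rw [hηeq p, if_pos ((hmemS p).mp hp)]
  have hη0 : ∀ p, p ∉ S → η p = 0 :=
    fun p hp => by rw [hηeq p, if_neg fun hc => hp ((hmemS p).mpr hc)]
  have hηsumS : ∑ p ∈ S, η p = 1 := by
    calc ∑ p ∈ S, η p
        = ∑ p ∈ S, r * (∏ d' : {d' : D // d' ≠ d}, marg x d'.1 (p d')) /
            (1 - (1 - r) * typePay u x (glue d t p) * s₀) :=
          Finset.sum_congr rfl fun p hp => hηS p hp
      _ = 1 := hgs₀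
  have hkey : ∀ q ∈ S, η q * (1 - (1 - r) * typePay u x (glue d t q) * s₀)
      = r * ∏ d' : {d' : D // d' ≠ d}, marg x d'.1 (q d') := fun q hq => by
    rw [hηS q hq]
    exact div_mul_cancel₀ _ (hvalid₀ q hq).ne'
  have hL : s₀ * ∑ q ∈ S, η q * typePay u x (glue d t q) = 1 := by
    have hA : ∑ q ∈ S, η q * ((1 - r) * typePay u x (glue d t q) * s₀) = 1 - r := by
      have step : ∑ q ∈ S, η q * ((1 - r) * typePay u x (glue d t q) * s₀)
          = ∑ q ∈ S, (η q - r * ∏ d' : {d' : D // d' ≠ d}, marg x d'.1 (q d')) :=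
        Finset.sum_congr rfl fun q hq => by linear_combination -(hkey q hq)
      rw [step, Finset.sum_sub_distrib, hηsumS, ← Finset.mul_sum, hπS, mul_one]
    have hB : ∑ q ∈ S, η q * ((1 - r) * typePay u x (glue d t q) * s₀)
        = (1 - r) * s₀ * ∑ q ∈ S, η q * typePay u x (glue d t q) := by
      rw [Finset.mul_sum]
      exact Finset.sum_congr rfl fun q hq => by ring
    have hC := hA.symm.trans hB
    refine mul_left_cancel₀ hr1'.ne' ?_
    linear_combination -hC
  have hdenomη : (∑ p', if 0 < ∑ s : A d, x (glue d s p') then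
        η p' * typePay u x (glue d t p') else 0)
      = ∑ q ∈ S, η q * typePay u x (glue d t q) := by
    rw [hSdef, Finset.sum_filter]
  have hs₀L : (∑ q ∈ S, η q * typePay u x (glue d t q)) = s₀⁻¹ := by
    field_simp
    linear_combination hL
  refine ⟨η, ⟨?_, ?_, ?_, ?_⟩, ?_⟩
  · intro p
    rw [hηeq p]
    split
    · rename_i h
      exact div_nonneg (mul_nonneg hr0.le (hπpos p ((hmemS p).mpr h)).le)
        (hvalid₀ p ((hmemS p).mpr h)).le
    · exact le_rfl
  · rw [← Finset.sum_subset (Finset.subset_univ S) (fun p _ hp => hη0 p hp)]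
    exact hηsumS
  · intro p hp
    rw [hηeq p, if_neg hp]
  · intro p hp
    have hpS : p ∈ S := (hmemS p).mpr hp
    rw [hdenomη, hs₀L, div_eq_mul_inv, inv_inv]
    linear_combination hkey p hpS
  -- uniqueness
  · rintro η' ⟨hn', hsum', hzero', heq'⟩
    have hzero'S : ∀ p, p ∉ S → η' p = 0 := fun p hp =>
      hzero' p fun h => hp ((hmemS p).mpr h)
    have hsum'S : ∑ p ∈ S, η' p = 1 := by
      rw [Finset.sum_subset (Finset.subset_univ S) (fun p _ hp => hzero'S p hp)]
      exact hsum'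
    have hL'pos : 0 < ∑ q ∈ S, η' q * typePay u x (glue d t q) := by
      obtain ⟨p₀, hp₀S, hp₀⟩ := exists_pos_of_sum_pos'
        (show (0:ℝ) < ∑ p ∈ S, η' p from by rw [hsum'S]; norm_num)
      exact Finset.sum_pos' (fun q hq => mul_nonneg (hn' q) (hT _).le)
        ⟨p₀, hp₀S, mul_pos hp₀ (hT _)⟩
    have hdenomη' : (∑ p', if 0 < ∑ s : A d, x (glue d s p') then
          η' p' * typePay u x (glue d t p') else 0)
        = ∑ q ∈ S, η' q * typePay u x (glue d t q) := by
      rw [hSdef, Finset.sum_filter]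
    set L' := ∑ q ∈ S, η' q * typePay u x (glue d t q) with hL'def
    have hkey' : ∀ q ∈ S, η' q * (1 - (1 - r) * typePay u x (glue d t q) * L'⁻¹)
        = r * ∏ d' : {d' : D // d' ≠ d}, marg x d'.1 (q d') := by
      intro q hq
      have h := heq' q ((hmemS q).mp hq)
      rw [hdenomη'] at h
      linear_combination h
    have hη'pos : ∀ q ∈ S, 0 < η' q := by
      intro q hq
      rcases (hn' q).lt_or_eq with h | h
      · exact h
      · exfalso
        have hk := hkey' q hq
        rw [← h, zero_mul] at hk
        exact (mul_pos hr0 (hπpos q hq)).ne hk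
    have hval' : ∀ q ∈ S, 0 < 1 - (1 - r) * typePay u x (glue d t q) * L'⁻¹ := by
      intro q hq
      have hk := hkey' q hq
      have heqd : 1 - (1 - r) * typePay u x (glue d t q) * L'⁻¹
          = (r * ∏ d' : {d' : D // d' ≠ d}, marg x d'.1 (q d')) / η' q := by
        rw [eq_div_iff (hη'pos q hq).ne']
        linear_combination hk
      rw [heqd]
      exact div_pos (mul_pos hr0 (hπpos q hq)) (hη'pos q hq)
    have hg' : ∑ q ∈ S, r * (∏ d' : {d' : D // d' ≠ d}, marg x d'.1 (q d')) /
        (1 - (1 - r) * typePay u x (glue d t q) * L'⁻¹) = 1 := by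
      have step : ∑ q ∈ S, r * (∏ d' : {d' : D // d' ≠ d}, marg x d'.1 (q d')) /
          (1 - (1 - r) * typePay u x (glue d t q) * L'⁻¹) = ∑ q ∈ S, η' q :=
        Finset.sum_congr rfl fun q hq => by
          rw [← hkey' q hq]
          exact mul_div_cancel_right₀ _ (hval' q hq).ne'
      rw [step, hsum'S]
    have hL'eq : L'⁻¹ = s₀ := huniq L'⁻¹ ⟨inv_pos.mpr hL'pos, hval', hg'⟩
    funext p
    by_cases hpS : p ∈ S
    · rw [hηeq p, if_pos ((hmemS p).mp hpS), ← hL'eq, eq_div_iff (hval' p hpS).ne']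
      linear_combination hkey' p hpS
    · rw [hηeq p, if_neg fun h => hpS ((hmemS p).mpr h)]
      exact hzero'S p hpS
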